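/- For every sufficiently large real x there exists a real number m ≥ 2 such that simultaneously π(m) ≥ (log x)/(log log x) + 2 and θ(m) ≤ log x, where π(m) = Σ_{p ≤ m} 1 is the prime counting function and θ(m) = Σ_{p ≤ m} log p is the Chebyshev theta function (both sums over primes p). -/

import Mathlib

open Filter Finset Real

namespace ChebAux

-- from a.lean
/-- prime counting: number of primes ≤ N -/
noncomputable def pic (N : ℕ) : ℕ := ((Finset.range (N+1)).filter Nat.Prime).card

lemma pic_eq_count (N : ℕ) : pic N = Nat.count Nat.Prime (N+1) := by
  rw [Nat.count_eq_card_filter_range]; rfl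

lemma pic_mono {M N : ℕ} (h : M ≤ N) : pic M ≤ pic N :=
  Finset.card_le_card (Finset.filter_subset_filter _ (Finset.range_subset_range.2 (by omega)))

/-- Chebyshev: 4^n ≤ n * (2n)^{π(2n)} for n ≥ 4. -/
lemma four_pow_le (n : ℕ) (hn : 4 ≤ n) : 4^n ≤ n * (2*n)^(pic (2*n)) := by
  have h1 := Nat.four_pow_lt_mul_centralBinom n (by omega)
  have h2 : n.centralBinom ≤ (2*n)^(pic (2*n)) := by
    rw [← Nat.prod_pow_factorization_centralBinom n]
    have heq : ∏ p ∈ Finset.range (2*n+1), p ^ (n.centralBinom).factorization p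
        = ∏ p ∈ (Finset.range (2*n+1)).filter Nat.Prime,
            p ^ (n.centralBinom).factorization p := by
      rw [Finset.prod_filter_of_ne]
      intro p _ hne
      by_contra hp
      rw [Nat.factorization_eq_zero_of_not_prime _ hp] at hne
      exact hne (pow_zero p)
    rw [heq]
    calc ∏ p ∈ (Finset.range (2*n+1)).filter Nat.Prime,
            p ^ (n.centralBinom).factorization p
        ≤ ∏ _p ∈ (Finset.range (2*n+1)).filter Nat.Prime, (2*n) := by
          apply Finset.prod_le_prod' 
          intro p _
          exact Nat.pow_factorization_choose_le (by omega)
      _ = (2*n)^(pic (2*n)) := by rw [Finset.prod_const]; rfl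
  calc 4^n ≤ n * n.centralBinom := h1.le
    _ ≤ n * (2*n)^(pic (2*n)) := Nat.mul_le_mul_left n h2

-- from b.lean
lemma real_bound (n : ℕ) (hn : 4 ≤ n) :
    (n:ℝ) * Real.log 4 ≤ Real.log n + (pic (2*n) : ℝ) * Real.log (2*n) := by
  have h1 := four_pow_le n hn
  have h2 : ((4:ℝ))^n ≤ (n:ℝ) * ((2*n:ℕ):ℝ)^(pic (2*n)) := by
    have : ((4^n : ℕ):ℝ) ≤ ((n * (2*n)^(pic (2*n)) : ℕ):ℝ) := Nat.cast_le.2 h1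
    push_cast at this ⊢
    convert this using 2
  have h3 : Real.log ((4:ℝ)^n) ≤ Real.log ((n:ℝ) * ((2*n:ℕ):ℝ)^(pic (2*n))) :=
    Real.log_le_log (by positivity) h2
  rw [Real.log_pow, Real.log_mul (by positivity) (by positivity), Real.log_pow] at h3
  push_cast at h3 ⊢
  linarith

lemma pic_lower (N : ℕ) (hN : 8 ≤ N) :
    ((N:ℝ) - 1) * Real.log 2 ≤ Real.log N + (pic N : ℝ) * Real.log N := by
  set n := N / 2 with hn
  have hn4 : 4 ≤ n := by omega
  have h2n : 2*n ≤ N := by omega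
  have hN1 : N ≤ 2*n + 1 := by omega
  have hmono : pic (2*n) ≤ pic N := pic_mono h2n
  have hr := real_bound n hn4
  have hlog4 : Real.log 4 = 2 * Real.log 2 := by
    rw [show (4:ℝ) = 2^2 by norm_num, Real.log_pow]; push_cast; ring
  have hlogn : Real.log (n:ℝ) ≤ Real.log (N:ℝ) :=
    Real.log_le_log (by positivity) (by exact_mod_cast Nat.div_le_self N 2)
  have hlog2n : Real.log ((2*n:ℕ):ℝ) ≤ Real.log (N:ℝ) :=
    Real.log_le_log (by positivity) (by exact_mod_cast h2n)
  have hlog2npos : 0 ≤ Real.log ((2*n:ℕ):ℝ) :=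
    Real.log_nonneg (by exact_mod_cast Nat.one_le_iff_ne_zero.2 (by omega))
  have hprod : (pic (2*n) : ℝ) * Real.log ((2*n:ℕ):ℝ) ≤ (pic N : ℝ) * Real.log (N:ℝ) := by
    apply mul_le_mul (by exact_mod_cast hmono) hlog2n hlog2npos (by positivity)
  have hL : ((N:ℝ) - 1) * Real.log 2 ≤ (n:ℝ) * Real.log 4 := by
    rw [hlog4]
    have : ((N:ℝ) - 1) ≤ 2 * (n:ℝ) := by
      have : (N:ℝ) ≤ 2*(n:ℝ) + 1 := by exact_mod_cast hN1
      linarith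
    nlinarith [Real.log_pos (by norm_num : (1:ℝ) < 2), this]
  push_cast at hr ⊢
  push_cast at hprod hlogn
  linarith

-- from c.lean
noncomputable def q (k : ℕ) : ℕ := Nat.nth Nat.Prime k

lemma q_prime (k : ℕ) : (q k).Prime := Nat.prime_nth_prime k

lemma count_q (k : ℕ) : Nat.count Nat.Prime (q k) = k := Nat.primeCounting'_nth_eq k

lemma pic_q (k : ℕ) : pic (q k) = k + 1 := by
  rw [pic_eq_count, Nat.count_succ, count_q, if_pos (q_prime k)]

lemma q_ge (k : ℕ) : k + 2 ≤ q k := Nat.add_two_le_nth_prime k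

lemma q_bound1 (k : ℕ) (hk : 6 ≤ k) :
    ((q k : ℝ) - 1) * Real.log 2 ≤ ((k:ℝ)+2) * Real.log (q k) := by
  have h8 : 8 ≤ q k := le_trans (by omega) (q_ge k)
  have := pic_lower (q k) h8
  rw [pic_q] at this
  push_cast at this
  linarith

/-- theta over primes up to q K equals sum over first K+1 primes -/
lemma theta_eq (K : ℕ) :
    (∑ p ∈ (Finset.range (q K + 1)).filter Nat.Prime, Real.log p)
      = ∑ k ∈ Finset.range (K+1), Real.log (q k : ℝ) := by
  have himg : (Finset.range (q K + 1)).filter Nat.Prime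
      = (Finset.range (K+1)).image (fun k => Nat.nth Nat.Prime k) := by
    ext p
    simp only [Finset.mem_filter, Finset.mem_image, Finset.mem_range, Nat.lt_succ_iff]
    constructor
    · rintro ⟨hpq, hp⟩
      refine ⟨Nat.count Nat.Prime p, ?_, Nat.nth_count hp⟩
      have := Nat.count_monotone Nat.Prime hpq
      rwa [count_q] at this
    · rintro ⟨k, hk, rfl⟩
      exact ⟨(Nat.nth_le_nth Nat.infinite_setOf_prime).2 hk, Nat.prime_nth_prime k⟩
  rw [himg, Finset.sum_image (fun a _ b _ hab =>
    Nat.nth_injective Nat.infinite_setOf_prime hab)]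
  rfl

-- from d.lean
lemma log_le_two_sqrt {V : ℝ} (h : 1 ≤ V) : Real.log V ≤ 2 * Real.sqrt V := by
  have h0 : (0:ℝ) ≤ V := by linarith
  have h1 : Real.log V = 2 * Real.log (Real.sqrt V) := by
    rw [Real.log_sqrt h0]; ring
  have h2 : Real.log (Real.sqrt V) ≤ Real.sqrt V - 1 :=
    Real.log_le_sub_one_of_pos (Real.sqrt_pos.2 (by linarith))
  nlinarith [Real.sqrt_nonneg V]

lemma q_bound2 (k : ℕ) (hk : 6 ≤ k) : (q k : ℝ) ≤ 36 * ((k:ℝ)+2)^2 := by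
  set Q : ℝ := (q k : ℝ) with hQ
  have hQ8 : (8:ℝ) ≤ Q := by
    have h := q_ge k
    rw [hQ]; exact_mod_cast (by omega : (8:ℕ) ≤ q k)
  set s : ℝ := Real.sqrt Q with hs
  have hsq : s^2 = Q := Real.sq_sqrt (by linarith)
  have hs0 : 0 ≤ s := Real.sqrt_nonneg Q
  have hlogQ : Real.log Q ≤ 2 * s := log_le_two_sqrt (by linarith)
  have h1 := q_bound1 k hk
  have hl2 := Real.log_two_gt_d9
  have ht : (8:ℝ) ≤ (k:ℝ)+2 := by
    have : (6:ℝ) ≤ (k:ℝ) := by exact_mod_cast hk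
    linarith
  set t : ℝ := (k:ℝ)+2 with htdef
  -- (Q-1)*log 2 ≤ t * log Q ≤ t * 2 s
  have h2 : (Q-1) * Real.log 2 ≤ t * (2*s) := by
    have hlog2pos : 0 < Real.log 2 := by linarith
    calc (Q-1) * Real.log 2 ≤ t * Real.log Q := h1
      _ ≤ t * (2*s) := by nlinarith
  -- claim s ≤ 3 t
  have hs3 : s ≤ 3 * t := by
    by_contra hcon
    push_neg at hcon
    have hst : s * t > 0 := by nlinarith
    nlinarith [mul_pos (show (0:ℝ) < s - 3*t by linarith) (show (0:ℝ) < s by nlinarith)]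
  nlinarith

lemma log36 : Real.log 36 ≤ 3.6 := by
  have h : (36:ℝ) = 2^5 * (9/8) := by norm_num
  rw [h, Real.log_mul (by norm_num) (by norm_num), Real.log_pow]
  have h1 := Real.log_two_lt_d9
  have h2 := Real.log_le_sub_one_of_pos (show (0:ℝ) < 9/8 by norm_num)
  push_cast
  nlinarith

lemma log4 : Real.log 4 ≤ 1.39 := by
  have h : (4:ℝ) = 2^2 := by norm_num
  rw [h, Real.log_pow]
  have h1 := Real.log_two_lt_d9
  push_cast; nlinarith

lemma log18 : Real.log 1.8 ≤ 0.6 := by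
  have h : (1.8:ℝ) = 2 * 0.9 := by norm_num
  rw [h, Real.log_mul (by norm_num) (by norm_num)]
  have h1 := Real.log_two_lt_d9
  have h2 := Real.log_le_sub_one_of_pos (show (0:ℝ) < 0.9 by norm_num)
  nlinarith

lemma tendsto_logk : Tendsto (fun k : ℕ => Real.log ((k:ℝ)+2)) atTop atTop :=
  Real.tendsto_log_atTop.comp (tendsto_atTop_add_const_right _ 2 tendsto_natCast_atTop_atTop)

lemma L6 : ∀ᶠ k : ℕ in atTop, Real.log (q k : ℝ) ≤ 2.2 * Real.log ((k:ℝ)+2) := by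
  filter_upwards [eventually_ge_atTop 6, tendsto_logk.eventually_ge_atTop 18] with k hk h18
  have hb := q_bound2 k hk
  have ht : (0:ℝ) < (k:ℝ)+2 := by positivity
  have hQpos : (0:ℝ) < (q k : ℝ) := by
    have := q_ge k; have : (1:ℕ) ≤ q k := by omega
    exact_mod_cast Nat.lt_of_lt_of_le Nat.zero_lt_one this
  have h1 : Real.log (q k : ℝ) ≤ Real.log (36 * ((k:ℝ)+2)^2) :=
    Real.log_le_log hQpos hb
  rw [Real.log_mul (by norm_num) (by positivity), Real.log_pow] at h1
  have := log36
  push_cast at h1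
  nlinarith

lemma L7 : ∀ᶠ k : ℕ in atTop, (q k : ℝ) ≤ 4 * ((k:ℝ)+2) * Real.log ((k:ℝ)+2) := by
  filter_upwards [L6, eventually_ge_atTop 6, tendsto_logk.eventually_ge_atTop 1] with k h6 hk h1
  have hb1 := q_bound1 k hk
  have hl2 := Real.log_two_gt_d9
  have ht : (8:ℝ) ≤ (k:ℝ)+2 := by
    have : (6:ℝ) ≤ (k:ℝ) := by exact_mod_cast hk
    linarith
  have hQ1 : (1:ℝ) ≤ (q k : ℝ) := by
    have : (1:ℕ) ≤ q k := le_trans (by omega) (q_ge k)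
    exact_mod_cast this
  have key : ((q k : ℝ) - 1) * Real.log 2 ≤ ((k:ℝ)+2) * (2.2 * Real.log ((k:ℝ)+2)) := by
    calc ((q k : ℝ) - 1) * Real.log 2 ≤ ((k:ℝ)+2) * Real.log (q k) := hb1
      _ ≤ ((k:ℝ)+2) * (2.2 * Real.log ((k:ℝ)+2)) := by nlinarith
  nlinarith [mul_le_mul ht h1 (by norm_num : (0:ℝ) ≤ 1) (by linarith : (0:ℝ) ≤ (k:ℝ)+2)]

-- from e.lean
lemma qpos (k : ℕ) : (0:ℝ) < (q k : ℝ) := by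
  have : (1:ℕ) ≤ q k := le_trans (by omega) (q_ge k)
  exact_mod_cast Nat.lt_of_lt_of_le Nat.zero_lt_one this

lemma L8 : ∀ᶠ k : ℕ in atTop, Real.log (q k : ℝ) ≤ 1.1 * Real.log ((k:ℝ)+2) := by
  filter_upwards [L7, tendsto_logk.eventually_ge_atTop 1600, eventually_ge_atTop 6]
    with k h7 hL hk
  set t : ℝ := (k:ℝ)+2 with ht
  set Lt : ℝ := Real.log t with hLt
  have htpos : (0:ℝ) < t := by positivity
  have hLtpos : (0:ℝ) < Lt := by linarith
  have h1 : Real.log (q k : ℝ) ≤ Real.log (4 * t * Lt) :=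
    Real.log_le_log (qpos k) h7
  rw [Real.log_mul (by positivity) (by positivity),
      Real.log_mul (by norm_num) (by positivity)] at h1
  -- log Lt ≤ 2 √Lt ≤ Lt/20
  have h2 : Real.log Lt ≤ 2 * Real.sqrt Lt := log_le_two_sqrt (by linarith)
  have h3 : Real.sqrt Lt * Real.sqrt Lt = Lt := Real.mul_self_sqrt (by linarith)
  have h4 : (40:ℝ) ≤ Real.sqrt Lt := by
    have : Real.sqrt 1600 ≤ Real.sqrt Lt := Real.sqrt_le_sqrt hL
    rwa [show (1600:ℝ) = 40^2 by norm_num, Real.sqrt_sq (by norm_num : (0:ℝ) ≤ 40)] at this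
  have h5 : 40 * Real.sqrt Lt ≤ Lt := by nlinarith
  -- log t = Lt
  have := log4
  nlinarith

lemma L9 : ∀ᶠ k : ℕ in atTop,
    Real.log (q k : ℝ) ≤ Real.log ((k:ℝ)+2) + Real.log (Real.log ((k:ℝ)+2)) + 0.6 := by
  filter_upwards [L8, eventually_ge_atTop 6, tendsto_logk.eventually_ge_atTop 10] with k h8 hk h10
  set t : ℝ := (k:ℝ)+2 with ht
  set Lt : ℝ := Real.log t with hLt
  have htpos : (8:ℝ) ≤ t := by
    have : (6:ℝ) ≤ (k:ℝ) := by exact_mod_cast hk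
    simp only [ht]; linarith
  have hLtpos : (0:ℝ) < Lt := by linarith
  have hb1 := q_bound1 k hk
  have hl2 := Real.log_two_gt_d9
  have hQ1 : (1:ℝ) ≤ (q k : ℝ) := by
    have : (1:ℕ) ≤ q k := le_trans (by omega) (q_ge k)
    exact_mod_cast this
  -- q ≤ 1.8 t Lt
  have key : (q k : ℝ) ≤ 1.8 * (t * Lt) := by
    have h2 : ((q k : ℝ) - 1) * Real.log 2 ≤ t * (1.1 * Lt) := by
      calc ((q k : ℝ) - 1) * Real.log 2 ≤ t * Real.log (q k) := hb1
        _ ≤ t * (1.1 * Lt) := by nlinarith [Real.log_nonneg hQ1]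
    nlinarith [mul_le_mul htpos h10 (by norm_num : (0:ℝ) ≤ 10) (by linarith : (0:ℝ) ≤ t)]
  have h1 : Real.log (q k : ℝ) ≤ Real.log (1.8 * (t * Lt)) :=
    Real.log_le_log (qpos k) key
  rw [Real.log_mul (by norm_num) (by positivity),
      Real.log_mul (by positivity) (by positivity)] at h1
  have := log18
  linarith

-- from f.lean
lemma sum_log_le (M : ℕ) :
    ∑ j ∈ Finset.range M, Real.log ((j:ℝ)+1) ≤ ((M:ℝ)+1) * Real.log ((M:ℝ)+1) - M := by
  induction M with
  | zero => simp
  | succ M ih =>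
    rw [Finset.sum_range_succ]
    have hM1 : (0:ℝ) < (M:ℝ)+1 := by positivity
    have hM2 : (0:ℝ) < (M:ℝ)+2 := by positivity
    have key : 1 + ((M:ℝ)+2) * Real.log ((M:ℝ)+1) ≤ ((M:ℝ)+2) * Real.log ((M:ℝ)+2) := by
      have hd : Real.log ((M:ℝ)+2) - Real.log ((M:ℝ)+1)
          = Real.log (((M:ℝ)+2)/((M:ℝ)+1)) := (Real.log_div (by positivity) (by positivity)).symm
      have h2 : 1 - (((M:ℝ)+2)/((M:ℝ)+1))⁻¹ ≤ Real.log (((M:ℝ)+2)/((M:ℝ)+1)) :=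
        Real.one_sub_inv_le_log_of_pos (by positivity)
      have h3 : (((M:ℝ)+2)/((M:ℝ)+1))⁻¹ = ((M:ℝ)+1)/((M:ℝ)+2) := by
        rw [inv_div]
      have h4 : ((M:ℝ)+2) * (1 - ((M:ℝ)+1)/((M:ℝ)+2)) = 1 := by
        field_simp; norm_num
      rw [h3] at h2
      rw [← hd] at h2
      nlinarith
    push_cast
    have harg : ((M:ℝ)+1+1) = (M:ℝ)+2 := by ring
    rw [harg]
    nlinarith

lemma g_nonneg (k : ℕ) :
    0 ≤ Real.log ((k:ℝ)+2) + Real.log (Real.log ((k:ℝ)+2)) + 0.6 := by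
  have h2 : Real.log 2 ≤ Real.log ((k:ℝ)+2) :=
    Real.log_le_log (by norm_num) (by exact_mod_cast le_add_of_nonneg_left (Nat.zero_le k))
  have hl2 := Real.log_two_gt_d9
  have hl2' := Real.log_two_lt_d9
  have hpos : (0:ℝ) < Real.log ((k:ℝ)+2) := by linarith
  have h3 : 1 - (Real.log ((k:ℝ)+2))⁻¹ ≤ Real.log (Real.log ((k:ℝ)+2)) :=
    Real.one_sub_inv_le_log_of_pos hpos
  have h4 : (Real.log ((k:ℝ)+2))⁻¹ ≤ (Real.log 2)⁻¹ := by
    apply inv_anti₀ (by linarith) h2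
  have h5 : (Real.log 2)⁻¹ ≤ 1.45 := by
    rw [inv_le_comm₀ (by linarith) (by norm_num)]
    linarith
  linarith

lemma loglog_K3_nonneg (K : ℕ) : 0 ≤ Real.log (Real.log ((K:ℝ)+3)) := by
  apply Real.log_nonneg
  have h3 : Real.exp 1 ≤ (K:ℝ)+3 := by
    have := Real.exp_one_lt_d9
    have hK : (0:ℝ) ≤ (K:ℝ) := Nat.cast_nonneg K
    linarith
  calc (1:ℝ) = Real.log (Real.exp 1) := (Real.log_exp 1).symm
    _ ≤ Real.log ((K:ℝ)+3) := Real.log_le_log (Real.exp_pos 1) h3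

lemma main_theta : ∃ B : ℝ, 0 ≤ B ∧ ∃ k₁ : ℕ, ∀ K : ℕ, k₁ ≤ K →
    (∑ k ∈ Finset.range (K+1), Real.log (q k : ℝ))
      ≤ B + ((K:ℝ)+3) * (Real.log ((K:ℝ)+3) + Real.log (Real.log ((K:ℝ)+3)))
        + 0.6*((K:ℝ)+1) - ((K:ℝ)+2) := by
  obtain ⟨k₀, hk₀⟩ := eventually_atTop.1 L9
  refine ⟨∑ k ∈ Finset.range k₀, Real.log (q k : ℝ), ?_, k₀, ?_⟩
  · apply Finset.sum_nonneg
    intro k _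
    apply Real.log_nonneg
    have : (1:ℕ) ≤ q k := le_trans (by omega) (q_ge k)
    exact_mod_cast this
  intro K hK
  set g : ℕ → ℝ := fun k => Real.log ((k:ℝ)+2) + Real.log (Real.log ((k:ℝ)+2)) + 0.6 with hg
  have hsplit : (∑ k ∈ Finset.range (K+1), Real.log (q k : ℝ))
      = (∑ k ∈ Finset.range k₀, Real.log (q k : ℝ))
        + ∑ k ∈ Finset.Ico k₀ (K+1), Real.log (q k : ℝ) := by
    simp only [Finset.range_eq_Ico]
    exact (Finset.sum_Ico_consecutive _ (Nat.zero_le k₀) (by omega)).symm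
  have h1 : ∑ k ∈ Finset.Ico k₀ (K+1), Real.log (q k : ℝ)
      ≤ ∑ k ∈ Finset.Ico k₀ (K+1), g k :=
    Finset.sum_le_sum fun k hk => hk₀ k (Finset.mem_Ico.1 hk).1
  have h2 : ∑ k ∈ Finset.Ico k₀ (K+1), g k ≤ ∑ k ∈ Finset.range (K+1), g k := by
    rw [Finset.range_eq_Ico,
      ← Finset.sum_Ico_consecutive g (Nat.zero_le k₀) (show k₀ ≤ K+1 by omega)]
    have : 0 ≤ ∑ k ∈ Finset.Ico 0 k₀, g k :=
      Finset.sum_nonneg fun k _ => g_nonneg k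
    linarith
  have hsum1 : ∑ k ∈ Finset.range (K+1), Real.log ((k:ℝ)+2)
      ≤ ((K:ℝ)+3) * Real.log ((K:ℝ)+3) - ((K:ℝ)+2) := by
    have h := sum_log_le (K+2)
    rw [show K+2 = (K+1)+1 from rfl, Finset.sum_range_succ'] at h
    push_cast at h
    norm_num at h
    have heq : ∑ i ∈ Finset.range (K+1), Real.log ((i:ℝ)+1+1)
        = ∑ i ∈ Finset.range (K+1), Real.log ((i:ℝ)+2) :=
      Finset.sum_congr rfl fun i _ => by rw [show ((i:ℝ)+1+1) = (i:ℝ)+2 from by ring]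
    rw [heq] at h
    have harg : ((K:ℝ)+1+1+1) = (K:ℝ)+3 := by ring
    rw [harg] at h
    linarith
  have hsum2 : ∑ k ∈ Finset.range (K+1), Real.log (Real.log ((k:ℝ)+2))
      ≤ ((K:ℝ)+1) * Real.log (Real.log ((K:ℝ)+3)) := by
    have hb : ∀ k ∈ Finset.range (K+1),
        Real.log (Real.log ((k:ℝ)+2)) ≤ Real.log (Real.log ((K:ℝ)+3)) := by
      intro k hk
      have hkK : (k:ℝ) ≤ (K:ℝ) := by
        exact_mod_cast Nat.lt_succ_iff.1 (Finset.mem_range.1 hk)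
      have hpos : (0:ℝ) < Real.log ((k:ℝ)+2) := by
        apply Real.log_pos
        have : (0:ℝ) ≤ (k:ℝ) := Nat.cast_nonneg k
        linarith
      apply Real.log_le_log hpos
      apply Real.log_le_log (by positivity)
      linarith
    calc ∑ k ∈ Finset.range (K+1), Real.log (Real.log ((k:ℝ)+2))
        ≤ ∑ _k ∈ Finset.range (K+1), Real.log (Real.log ((K:ℝ)+3)) :=
          Finset.sum_le_sum hb
      _ = ((K:ℝ)+1) * Real.log (Real.log ((K:ℝ)+3)) := by
          rw [Finset.sum_const, Finset.card_range]; push_cast; ring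
  have hgsum : ∑ k ∈ Finset.range (K+1), g k
      = (∑ k ∈ Finset.range (K+1), Real.log ((k:ℝ)+2))
        + (∑ k ∈ Finset.range (K+1), Real.log (Real.log ((k:ℝ)+2)))
        + 0.6*((K:ℝ)+1) := by
    rw [hg]
    rw [Finset.sum_add_distrib, Finset.sum_add_distrib, Finset.sum_const, Finset.card_range]
    push_cast; ring
  have hK3 := loglog_K3_nonneg K
  nlinarith [hsplit, h1, h2, hsum1, hsum2, hgsum]

-- from g.lean
lemma tendsto_ssqrt : Tendsto (fun y : ℝ => Real.sqrt (Real.sqrt y)) atTop atTop := by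
  apply Filter.tendsto_atTop_atTop.2
  intro b
  refine ⟨(max b 0)^4, fun y hy => ?_⟩
  have h0 : 0 ≤ max b 0 := le_max_right _ _
  have hval : Real.sqrt (Real.sqrt ((max b 0)^4)) = max b 0 := by
    rw [show (max b 0)^4 = ((max b 0)^2)^2 by ring, Real.sqrt_sq (by positivity),
      Real.sqrt_sq h0]
  calc b ≤ max b 0 := le_max_left _ _
    _ = Real.sqrt (Real.sqrt ((max b 0)^4)) := hval.symm
    _ ≤ Real.sqrt (Real.sqrt y) := Real.sqrt_le_sqrt (Real.sqrt_le_sqrt hy)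

end ChebAux

open ChebAux Filter Finset Real in
set_option maxHeartbeats 1000000 in
/-- For every sufficiently large `x` there is a real `m ≥ 2` with
`π(m) ≥ (log x)/(log log x) + 2` and `θ(m) ≤ log x`. -/
theorem exists_chebyshev_choice :
    ∀ᶠ x : ℝ in Filter.atTop, ∃ m : ℝ, 2 ≤ m ∧
      Real.log x / Real.log (Real.log x) + 2 ≤
        (((Finset.range (⌊m⌋₊ + 1)).filter Nat.Prime).card : ℝ) ∧
      (∑ p ∈ (Finset.range (⌊m⌋₊ + 1)).filter Nat.Prime, Real.log p) ≤ Real.log x := by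
  obtain ⟨B, hB0, k₁, hC⟩ := main_theta
  have hP : ∀ᶠ y : ℝ in atTop, (16 ≤ y ∧ 2 ≤ Real.log y ∧
      (k₁:ℝ) ≤ y / Real.log y ∧ B + 5*Real.log y + 30 ≤ 0.4*(y/Real.log y)) := by
    filter_upwards [eventually_ge_atTop 16, Real.tendsto_log_atTop.eventually_ge_atTop 2,
      tendsto_ssqrt.eventually_ge_atTop (max 20 (10*(B+(k₁:ℝ))+400))] with y h16 hlog2 huy
    have hu20 : (20:ℝ) ≤ Real.sqrt (Real.sqrt y) := le_trans (le_max_left _ _) huy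
    have huB : 10*(B+(k₁:ℝ))+400 ≤ Real.sqrt (Real.sqrt y) := le_trans (le_max_right _ _) huy
    set u : ℝ := Real.sqrt (Real.sqrt y) with hu
    have hy0 : (0:ℝ) ≤ y := by linarith
    have hsy0 : (0:ℝ) ≤ Real.sqrt y := Real.sqrt_nonneg y
    have hyu : y = u^4 := by
      rw [hu, show (4:ℕ) = 2*2 from rfl, pow_mul, Real.sq_sqrt hsy0, Real.sq_sqrt hy0]
    have hlogu : Real.log y = 4 * Real.log u := by
      rw [hu, Real.log_sqrt hsy0, Real.log_sqrt hy0]; ring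
    have hlogy4u : Real.log y ≤ 4 * u := by
      rw [hlogu]
      have := Real.log_le_sub_one_of_pos (show (0:ℝ) < u by linarith)
      linarith
    have hlogypos : (0:ℝ) < Real.log y := by linarith
    have hdiv : u^3/4 ≤ y / Real.log y := by
      rw [div_le_div_iff₀ (by norm_num) hlogypos]
      calc u^3 * Real.log y ≤ u^3 * (4*u) := by nlinarith
        _ = y * 4 := by rw [hyu]; ring
    have hk₁0 : (0:ℝ) ≤ (k₁:ℝ) := Nat.cast_nonneg k₁
    have huk : (k₁:ℝ) ≤ u := by nlinarith
    have hu2 : (400:ℝ) ≤ u^2 := by nlinarith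
    have hu3 : 400*u ≤ u^3 := by nlinarith
    refine ⟨h16, hlog2, ?_, ?_⟩
    · linarith
    · linarith
  have hx := Real.tendsto_log_atTop.eventually hP
  filter_upwards [hx] with x hx'
  obtain ⟨h16, hlog2, hLk, hMain⟩ := hx'
  set y := Real.log x with hy
  set L := y / Real.log y with hL
  have hypos : (0:ℝ) < y := by linarith
  have hlogypos : (0:ℝ) < Real.log y := by linarith
  have hLpos : (0:ℝ) < L := div_pos hypos hlogypos
  have hL100 : 100 ≤ L := by
    have : (0.4:ℝ)*L ≥ 40 := by
      rw [hL]; nlinarith [hMain]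
    linarith
  set K : ℕ := ⌈L⌉₊ + 1 with hKdef
  have hceil_ge : L ≤ (⌈L⌉₊ : ℝ) := Nat.le_ceil L
  have hceil_lt : (⌈L⌉₊ : ℝ) < L + 1 := Nat.ceil_lt_add_one hLpos.le
  have hKL : L ≤ (K:ℝ) := by push_cast [hKdef]; linarith
  have hKU : (K:ℝ) ≤ L + 2 := by push_cast [hKdef]; linarith
  have hKk₁ : k₁ ≤ K := by
    have : (k₁:ℝ) ≤ (K:ℝ) := le_trans hLk hKL
    exact_mod_cast this
  refine ⟨((q K : ℕ) : ℝ), ?_, ?_, ?_⟩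
  · exact_mod_cast (q_prime K).two_le
  · rw [Nat.floor_natCast,
      show ((Finset.range (q K + 1)).filter Nat.Prime).card = pic (q K) from rfl, pic_q]
    push_cast [hKdef]
    linarith
  · rw [Nat.floor_natCast, theta_eq]
    have hθ := hC K hKk₁
    set A : ℝ := (K:ℝ)+3 with hA
    have hApos : (0:ℝ) < A := by positivity
    have hA5 : A ≤ L + 5 := by rw [hA]; linarith
    have hLy : L + 5 ≤ y := by
      have h1 : L ≤ y/2 := by
        rw [hL, div_le_div_iff₀ hlogypos (by norm_num)]
        nlinarith
      linarith
    -- log A + log log A ≤ log y + 5/L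
    have hlogL : Real.log L = Real.log y - Real.log (Real.log y) :=
      Real.log_div (ne_of_gt hypos) (ne_of_gt hlogypos)
    have hlogA1 : Real.log A ≤ Real.log L + 5/L := by
      have s1 : Real.log A ≤ Real.log (L+5) := Real.log_le_log hApos hA5
      have s2 : Real.log (L+5) - Real.log L = Real.log ((L+5)/L) :=
        (Real.log_div (by linarith) (ne_of_gt hLpos)).symm
      have s3 : Real.log ((L+5)/L) ≤ (L+5)/L - 1 :=
        Real.log_le_sub_one_of_pos (by positivity)
      have s4 : (L+5)/L - 1 = 5/L := by field_simp; ring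
      linarith
    have hlogA_pos : (0:ℝ) < Real.log A := by
      apply Real.log_pos
      rw [hA]
      have : (0:ℝ) ≤ (K:ℝ) := Nat.cast_nonneg K
      linarith
    have hlogA2 : Real.log (Real.log A) ≤ Real.log (Real.log y) := by
      apply Real.log_le_log hlogA_pos
      calc Real.log A ≤ Real.log (L+5) := Real.log_le_log hApos hA5
        _ ≤ Real.log y := Real.log_le_log (by linarith) hLy
    have hbr : Real.log A + Real.log (Real.log A) ≤ Real.log y + 5/L := by
      linarith
    have hbr_nonneg : (0:ℝ) ≤ Real.log A + Real.log (Real.log A) := by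
      have := loglog_K3_nonneg K
      rw [← hA] at this
      linarith
    have hmul : A * (Real.log A + Real.log (Real.log A)) ≤ (L+5) * (Real.log y + 5/L) :=
      mul_le_mul hA5 hbr hbr_nonneg (by linarith)
    have hLlog : L * Real.log y = y := div_mul_cancel₀ y (ne_of_gt hlogypos)
    have h5L : L * (5/L) = 5 := by field_simp
    have h25 : 25/L ≤ 25 := by
      rw [div_le_iff₀ hLpos]; nlinarith
    have hexp : (L+5) * (Real.log y + 5/L) = y + 5*Real.log y + 5 + 25/L := by
      have : (L+5) * (Real.log y + 5/L) = L*Real.log y + L*(5/L) + 5*Real.log y + 5*(5/L) := by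
        ring
      rw [this, hLlog, h5L]
      ring
    rw [hexp] at hmul
    -- finish
    have hfinal : B + A * (Real.log A + Real.log (Real.log A)) + 0.6*((K:ℝ)+1) - ((K:ℝ)+2) ≤ y := by
      have h04 : (0.4:ℝ)*(y/Real.log y) = 0.4*L := by rw [hL]
      rw [h04] at hMain
      linarith [hmul, h25, hKL]
    linarith [hθ, hfinal]
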